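/- Let X ∈ ℝ^{n×p} with rank(X) = p < n, let w ∈ ℝⁿ, and let X̃ = (X, w) ∈ ℝ^{n×(p+1)} satisfy rank(X̃) = p + 1. Let B ∈ ℝ^{p×p} be symmetric positive definite, let a ∈ ℝᵖ and b ∈ ℝ, and let B̃ ∈ ℝ^{(p+1)×(p+1)} be the block matrix with top-left block B, last column (a; b²) and last row (aᵀ, b²). If B̃ is positive semidefinite, then tr((X̃ᵀX̃)^{-1} B̃) ≥ tr((XᵀX)^{-1} B). If moreover B̃ is positive definite, the inequality is strict. -/

import Mathlib

open Matrix

lemma aux_posDef_transpose_mul_self {n q : ℕ} (X : Matrix (Fin n) (Fin q) ℝ)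
    (h : X.rank = q) : (Xᵀ * X).PosDef := by
  have hker : ∀ v : Fin q → ℝ, X *ᵥ v = 0 → v = 0 := by
    have h1 : LinearMap.ker X.mulVecLin = ⊥ := by
      have h2 := LinearMap.finrank_range_add_finrank_ker X.mulVecLin
      rw [Module.finrank_pi] at h2
      have h3 : X.rank = Module.finrank ℝ (LinearMap.range X.mulVecLin) := rfl
      rw [← h3, h, Fintype.card_fin] at h2
      have h4 : Module.finrank ℝ (LinearMap.ker X.mulVecLin) = 0 := by omega
      exact Submodule.finrank_eq_zero.mp h4
    intro v hv
    have : v ∈ LinearMap.ker X.mulVecLin := by simpa [Matrix.mulVecLin_apply] using hv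
    simpa [h1] using this
  refine Matrix.PosDef.of_dotProduct_mulVec_pos ?_ ?_
  · show (Xᵀ * X)ᴴ = Xᵀ * X
    rw [conjTranspose_mul]
    simp [conjTranspose_eq_transpose_of_trivial]
  · intro x hx
    have hXx : X *ᵥ x ≠ 0 := fun h0 => hx (hker x h0)
    have key : star x ⬝ᵥ ((Xᵀ * X) *ᵥ x) = (X *ᵥ x) ⬝ᵥ (X *ᵥ x) := by
      rw [star_trivial, ← mulVec_mulVec, dotProduct_mulVec, vecMul_transpose]
    rw [key]
    rcases lt_or_eq_of_le (Finset.sum_nonneg fun i _ => mul_self_nonneg ((X *ᵥ x) i)) with h' | h'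
    · exact h'
    · exact absurd (dotProduct_self_eq_zero.mp h'.symm) hXx

lemma aux_trace_fromBlocks {l m : Type*} [Fintype l] [Fintype m]
    (A : Matrix l l ℝ) (B : Matrix l m ℝ) (C : Matrix m l ℝ) (D : Matrix m m ℝ) :
    (fromBlocks A B C D).trace = A.trace + D.trace := by
  simp [Matrix.trace, Fintype.sum_sum_type, Matrix.diag]

lemma aux_trace_submatrix {l m : Type*} [Fintype l] [Fintype m] (M : Matrix m m ℝ) (e : l ≃ m) :
    (M.submatrix e e).trace = M.trace := by
  rw [Matrix.trace, Matrix.trace]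
  exact Fintype.sum_equiv e _ _ (fun i => rfl)

lemma aux_quad_submatrix {l m : Type*} [Fintype l] [Fintype m]
    (M : Matrix m m ℝ) (e : l ≃ m) (x : l → ℝ) :
    x ⬝ᵥ ((M.submatrix e e) *ᵥ x) = (x ∘ e.symm) ⬝ᵥ (M *ᵥ (x ∘ e.symm)) := by
  rw [show (M.submatrix e e : Matrix l l ℝ) = M.submatrix ⇑e ⇑e from rfl, submatrix_mulVec_equiv]
  exact Fintype.sum_equiv e _ _ (fun i => by simp [Function.comp])

lemma aux_posDef_submatrix {l m : Type*} [Fintype l] [Fintype m] [DecidableEq l] [DecidableEq m]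
    {M : Matrix m m ℝ} (hM : M.PosDef) (e : l ≃ m) : (M.submatrix e e).PosDef := by
  refine Matrix.PosDef.of_dotProduct_mulVec_pos ((isHermitian_submatrix_equiv e).mpr hM.1) (fun x hx => ?_)
  rw [star_trivial, aux_quad_submatrix]
  have h2 : (x ∘ ⇑e.symm) ≠ 0 := by
    intro h0
    apply hx
    funext i
    have := congrFun h0 (e i)
    simpa using this
  simpa using hM.dotProduct_mulVec_pos h2
lemma aux_core {p : ℕ} (A : Matrix (Fin p) (Fin p) ℝ) (C : Matrix (Fin p) (Fin 1) ℝ)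
    (D : Matrix (Fin 1) (Fin 1) ℝ) (hA : A.PosDef)
    (hN : (fromBlocks A C Cᵀ D).PosDef)
    (B : Matrix (Fin p) (Fin p) ℝ) (Ca : Matrix (Fin p) (Fin 1) ℝ) (Db : Matrix (Fin 1) (Fin 1) ℝ) :
    0 < (D - Cᵀ*A⁻¹*C) 0 0 ∧
    ((fromBlocks A C Cᵀ D)⁻¹ * fromBlocks B Ca Caᵀ Db).trace
      = (A⁻¹*B).trace + ((D - Cᵀ*A⁻¹*C) 0 0)⁻¹ *
        ((fun i => (A⁻¹*C) i 0) ⬝ᵥ (B *ᵥ (fun i => (A⁻¹*C) i 0))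
          - (fun i => Ca i 0) ⬝ᵥ (fun i => (A⁻¹*C) i 0)
          - (fun i => (A⁻¹*C) i 0) ⬝ᵥ (fun i => Ca i 0) + Db 0 0) := by
  haveI iA : Invertible A := hA.isUnit.invertible
  set S := D - Cᵀ*A⁻¹*C with hSdef
  have hCH : Cᴴ = Cᵀ := conjTranspose_eq_transpose_of_trivial C
  have hSpsd : S.PosSemidef := by
    have h1 := hN.posSemidef
    rw [← hCH] at h1
    have h2 := (PosDef.fromBlocks₁₁ C D hA).mp h1
    rwa [hCH] at h2
  have hs0 : 0 ≤ S 0 0 := by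
    have := hSpsd.dotProduct_mulVec_nonneg (fun _ => 1)
    simpa [dotProduct, mulVec, Fin.sum_univ_one] using this
  haveI iN : Invertible (fromBlocks A C Cᵀ D) := hN.isUnit.invertible
  haveI iS' : Invertible (D - Cᵀ * ⅟A * C) := invertibleOfFromBlocks₁₁Invertible A C Cᵀ D
  have hiA : ⅟A = A⁻¹ := invOf_eq_nonsing_inv A
  have hSeq : D - Cᵀ * ⅟A * C = S := by rw [hiA]
  haveI iS : Invertible S := hSeq ▸ iS'
  have hsne : S 0 0 ≠ 0 := by
    intro h0
    have h1 : IsUnit S.det := (Matrix.isUnit_iff_isUnit_det S).mp (isUnit_of_invertible S)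
    rw [det_fin_one, h0] at h1
    exact h1.ne_zero rfl
  have hs : 0 < S 0 0 := lt_of_le_of_ne hs0 (Ne.symm hsne)
  refine ⟨hs, ?_⟩
  set s := S 0 0 with hsdef
  have hSinv : S⁻¹ = s⁻¹ • (1 : Matrix (Fin 1) (Fin 1) ℝ) := by
    apply inv_eq_right_inv
    have h1 : S * (s⁻¹ • 1) = s⁻¹ • S := by rw [mul_smul_comm, mul_one]
    rw [h1]
    ext i j
    fin_cases i; fin_cases j
    simp [mul_inv_cancel₀ hsne, inv_mul_cancel₀ hsne, ← hsdef]
  have h9 : ⅟(D - Cᵀ * ⅟A * C) = S⁻¹ := by rw [invOf_eq_nonsing_inv, hSeq]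
  have hNinv : (fromBlocks A C Cᵀ D)⁻¹ =
      fromBlocks (A⁻¹ + A⁻¹*C*S⁻¹*Cᵀ*A⁻¹) (-(A⁻¹*C*S⁻¹)) (-(S⁻¹*Cᵀ*A⁻¹)) S⁻¹ := by
    rw [← invOf_eq_nonsing_inv, invOf_fromBlocks₁₁_eq A C Cᵀ D, h9, hiA]
  -- symmetric inverse
  have hAT : Aᵀ = A := by rw [← conjTranspose_eq_transpose_of_trivial A]; exact hA.1
  have hAinvT : A⁻¹ᵀ = A⁻¹ := by rw [transpose_nonsing_inv, hAT]
  have hu : Cᵀ * A⁻¹ = (A⁻¹*C)ᵀ := by rw [transpose_mul, hAinvT]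
  set u := A⁻¹ * C with hudef
  set x0 : Fin p → ℝ := fun i => u i 0 with hx0
  -- scalar trace identities
  have hentry1 : (uᵀ * B * u) 0 0 = x0 ⬝ᵥ (B *ᵥ x0) := by
    simp only [mul_apply, transpose_apply, dotProduct, mulVec, Finset.sum_mul, Finset.mul_sum, hx0]
    rw [Finset.sum_comm]
    exact Finset.sum_congr rfl fun i _ => Finset.sum_congr rfl fun j _ => by ring
  have hT1 : (A⁻¹*C*S⁻¹*Cᵀ*A⁻¹*B).trace = s⁻¹ * (x0 ⬝ᵥ (B *ᵥ x0)) := by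
    rw [hSinv]
    simp only [Matrix.mul_smul, Matrix.smul_mul, Matrix.mul_one, Matrix.one_mul, trace_smul, smul_eq_mul]
    congr 1
    have h1 : A⁻¹*C*Cᵀ*A⁻¹*B = u * (Cᵀ*A⁻¹*B) := by
      rw [hudef]; simp only [Matrix.mul_assoc]
    rw [h1, trace_mul_comm, hu, trace_fin_one, hentry1]
  have hT2 : (A⁻¹*C*S⁻¹*Caᵀ).trace = s⁻¹ * ((fun i => Ca i 0) ⬝ᵥ x0) := by
    rw [hSinv]
    simp only [Matrix.mul_smul, Matrix.smul_mul, Matrix.mul_one, Matrix.one_mul, trace_smul, smul_eq_mul]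
    congr 1
    rw [show A⁻¹*C*Caᵀ = u * Caᵀ from rfl, trace_mul_comm, trace_fin_one]
    simp only [mul_apply, transpose_apply, dotProduct, hx0]
  have hT3 : (S⁻¹*Cᵀ*A⁻¹*Ca).trace = s⁻¹ * (x0 ⬝ᵥ (fun i => Ca i 0)) := by
    rw [hSinv]
    simp only [Matrix.mul_smul, Matrix.smul_mul, Matrix.mul_one, Matrix.one_mul, trace_smul,
      smul_eq_mul]
    congr 1
    rw [Matrix.mul_assoc, ← Matrix.mul_assoc Cᵀ A⁻¹ Ca, hu, trace_fin_one]
    simp only [mul_apply, transpose_apply, dotProduct, hx0]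
  have hT4 : (S⁻¹*Db).trace = s⁻¹ * Db 0 0 := by
    rw [hSinv, Matrix.smul_mul, Matrix.one_mul, trace_smul, trace_fin_one, smul_eq_mul]
  rw [hNinv, fromBlocks_multiply, aux_trace_fromBlocks]
  have expand : ((A⁻¹ + A⁻¹*C*S⁻¹*Cᵀ*A⁻¹) * B + -(A⁻¹*C*S⁻¹) * Caᵀ).trace
      + ((-(S⁻¹*Cᵀ*A⁻¹)) * Ca + S⁻¹ * Db).trace
      = (A⁻¹*B).trace + (A⁻¹*C*S⁻¹*Cᵀ*A⁻¹*B).trace - (A⁻¹*C*S⁻¹*Caᵀ).trace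
        - (S⁻¹*Cᵀ*A⁻¹*Ca).trace + (S⁻¹*Db).trace := by
    simp only [Matrix.add_mul, Matrix.neg_mul, trace_add, trace_neg]
    ring
  rw [expand, hT1, hT2, hT3, hT4]
  ring

/-- Appending a column to a full-column-rank matrix and a compatible
row/column to a positive (semi)definite matrix can only increase the trace
`tr((XᵀX)⁻¹ B)`; strictly so when the extended matrix is positive definite. -/
theorem trace_inv_mul_le_of_append_col
    {n p : ℕ} (hpn : p < n)
    (X : Matrix (Fin n) (Fin p) ℝ) (hXrank : X.rank = p)
    (w : Fin n → ℝ)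
    (Xt : Matrix (Fin n) (Fin (p + 1)) ℝ)
    (hXt : ∀ i j, Xt i j = Fin.lastCases (w i) (fun j' => X i j') j)
    (hXtrank : Xt.rank = p + 1)
    (B : Matrix (Fin p) (Fin p) ℝ) (hBsymm : B.IsSymm) (hBpd : B.PosDef)
    (a : Fin p → ℝ) (b : ℝ)
    (Bt : Matrix (Fin (p + 1)) (Fin (p + 1)) ℝ)
    (hBt : ∀ i j, Bt i j =
      Fin.lastCases
        (Fin.lastCases (b ^ 2) (fun j' => a j') j)
        (fun i' => Fin.lastCases (a i') (fun j' => B i' j') j) i)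
    (hBtpsd : Bt.PosSemidef) :
    ((Xᵀ * X)⁻¹ * B).trace ≤ ((Xtᵀ * Xt)⁻¹ * Bt).trace ∧
      (Bt.PosDef → ((Xᵀ * X)⁻¹ * B).trace < ((Xtᵀ * Xt)⁻¹ * Bt).trace) := by
  set e : Fin p ⊕ Fin 1 ≃ Fin (p+1) := finSumFinEquiv with he
  have hel : ∀ j' : Fin p, e (Sum.inl j') = j'.castSucc := fun j' => rfl
  have her : e (Sum.inr 0) = Fin.last p := by
    rw [he, finSumFinEquiv_apply_right]
    ext
    simp
  set W : Matrix (Fin n) (Fin 1) ℝ := Matrix.of (fun i _ => w i) with hW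
  have hXtY : Xt = (fromCols X W).submatrix id ⇑e.symm := by
    ext i j
    obtain ⟨k, rfl⟩ := e.surjective j
    rw [submatrix_apply, id, Equiv.symm_apply_apply, hXt]
    cases k with
    | inl k => rw [hel k]; simp [fromCols]
    | inr k =>
      have : k = 0 := Subsingleton.elim _ _
      subst this
      rw [her]
      simp [fromCols, hW]
  set Ca : Matrix (Fin p) (Fin 1) ℝ := Matrix.of (fun i _ => a i) with hCa
  set Db : Matrix (Fin 1) (Fin 1) ℝ := Matrix.of (fun _ _ => b^2) with hDb
  have hBtY : Bt = (fromBlocks B Ca Caᵀ Db).submatrix ⇑e.symm ⇑e.symm := by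
    ext i j
    obtain ⟨k, rfl⟩ := e.surjective i
    obtain ⟨l, rfl⟩ := e.surjective j
    rw [submatrix_apply, Equiv.symm_apply_apply, Equiv.symm_apply_apply, hBt]
    cases k with
    | inl k =>
      rw [hel k]
      cases l with
      | inl l => rw [hel l]; simp
      | inr l =>
        have : l = 0 := Subsingleton.elim _ _
        subst this
        rw [her]
        simp [hCa]
    | inr k =>
      have : k = 0 := Subsingleton.elim _ _
      subst this
      rw [her]
      cases l with
      | inl l => rw [hel l]; simp [hCa]
      | inr l =>
        have : l = 0 := Subsingleton.elim _ _
        subst this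
        rw [her]
        simp [hDb]
  have hWX : Wᵀ * X = (Xᵀ * W)ᵀ := by rw [transpose_mul, transpose_transpose]
  have hN : Xtᵀ * Xt
      = (fromBlocks (Xᵀ * X) (Xᵀ * W) (Xᵀ * W)ᵀ (Wᵀ * W)).submatrix ⇑e.symm ⇑e.symm := by
    rw [hXtY, transpose_submatrix, ← hWX, ← fromRows_mul_fromCols, ← transpose_fromCols]
    rw [show (id : Fin n → Fin n) = ⇑(Equiv.refl (Fin n)) from rfl, submatrix_mul_equiv]
  -- positive definiteness of the block Gram matrix
  have hNtpd : (Xtᵀ * Xt).PosDef := aux_posDef_transpose_mul_self Xt hXtrank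
  have hNpd : (fromBlocks (Xᵀ * X) (Xᵀ * W) (Xᵀ * W)ᵀ (Wᵀ * W)).PosDef := by
    have h1 := aux_posDef_submatrix hNtpd e
    rw [hN] at h1
    rwa [show ((fromBlocks (Xᵀ * X) (Xᵀ * W) (Xᵀ * W)ᵀ (Wᵀ * W)).submatrix ⇑e.symm ⇑e.symm).submatrix
        ⇑e ⇑e = fromBlocks (Xᵀ * X) (Xᵀ * W) (Xᵀ * W)ᵀ (Wᵀ * W) from by
      rw [submatrix_submatrix]
      simp] at h1
  have hApd : (Xᵀ * X).PosDef := aux_posDef_transpose_mul_self X hXrank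
  -- core computation
  obtain ⟨hs, htr⟩ := aux_core (Xᵀ * X) (Xᵀ * W) (Wᵀ * W) hApd hNpd B Ca Db
  -- transfer the trace across the reindexing
  have htrace_eq : ((Xtᵀ * Xt)⁻¹ * Bt).trace
      = ((fromBlocks (Xᵀ * X) (Xᵀ * W) (Xᵀ * W)ᵀ (Wᵀ * W))⁻¹
          * fromBlocks B Ca Caᵀ Db).trace := by
    rw [hN, hBtY, inv_submatrix_equiv, submatrix_mul_equiv, aux_trace_submatrix]
  -- the quadratic-form vector
  set x0 : Fin p → ℝ := fun i => ((Xᵀ * X)⁻¹ * (Xᵀ * W)) i 0 with hx0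
  set v : Fin (p+1) → ℝ := fun j => Fin.lastCases 1 (fun j' => -(x0 j')) j with hv
  have hvlast : v (Fin.last p) = 1 := by rw [hv]; simp
  have hvcast : ∀ j' : Fin p, v j'.castSucc = -(x0 j') := fun j' => by rw [hv]; simp
  have hQ : v ⬝ᵥ (Bt *ᵥ v)
      = (fun i => ((Xᵀ * X)⁻¹ * (Xᵀ * W)) i 0) ⬝ᵥ (B *ᵥ fun i => ((Xᵀ * X)⁻¹ * (Xᵀ * W)) i 0)
        - (fun i => Ca i 0) ⬝ᵥ (fun i => ((Xᵀ * X)⁻¹ * (Xᵀ * W)) i 0)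
        - (fun i => ((Xᵀ * X)⁻¹ * (Xᵀ * W)) i 0) ⬝ᵥ (fun i => Ca i 0) + Db 0 0 := by
    have hca : ∀ i, Ca i 0 = a i := fun i => rfl
    have hdb : Db 0 0 = b ^ 2 := rfl
    simp only [dotProduct, mulVec, ← hx0, hca, hdb]
    rw [Fin.sum_univ_castSucc]
    simp only [hvlast, hvcast, hBt, Fin.lastCases_last, Fin.lastCases_castSucc]
    simp only [Fin.sum_univ_castSucc, Fin.lastCases_castSucc, Fin.lastCases_last, hvcast,
      hvlast, hx0, mul_one, one_mul, mul_neg, neg_mul, neg_neg, mul_add, add_mul,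
      Finset.sum_add_distrib, Finset.sum_neg_distrib]
    ring
  have hQ0 : 0 ≤ v ⬝ᵥ (Bt *ᵥ v) := by
    have := hBtpsd.dotProduct_mulVec_nonneg v
    simpa using this
  have hQpos : Bt.PosDef → 0 < v ⬝ᵥ (Bt *ᵥ v) := by
    intro hpd
    have hvne : v ≠ 0 := by
      intro h0
      have h1 := congrFun h0 (Fin.last p)
      rw [hvlast] at h1
      exact one_ne_zero h1
    have := hpd.dotProduct_mulVec_pos hvne
    simpa using this
  have key : ((Xtᵀ * Xt)⁻¹ * Bt).trace = ((Xᵀ * X)⁻¹ * B).trace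
      + ((Wᵀ * W - (Xᵀ * W)ᵀ * (Xᵀ * X)⁻¹ * (Xᵀ * W)) 0 0)⁻¹ * (v ⬝ᵥ (Bt *ᵥ v)) := by
    rw [htrace_eq, htr, hQ]
  constructor
  · rw [key]
    have h2 : 0 ≤ ((Wᵀ * W - (Xᵀ * W)ᵀ * (Xᵀ * X)⁻¹ * (Xᵀ * W)) 0 0)⁻¹ * (v ⬝ᵥ (Bt *ᵥ v)) :=
      mul_nonneg (inv_nonneg.2 hs.le) hQ0
    linarith
  · intro hpd
    rw [key]
    have h2 : 0 < ((Wᵀ * W - (Xᵀ * W)ᵀ * (Xᵀ * X)⁻¹ * (Xᵀ * W)) 0 0)⁻¹ * (v ⬝ᵥ (Bt *ᵥ v)) :=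
      mul_pos (inv_pos.2 hs) (hQpos hpd)
    linarith
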